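/- For every pair of distinct points a, c ∈ ℝ² and every angle β ∈ (0,π), there exist exactly two points o ∈ ℝ² satisfying dist(o,a) = dist(o,c) and ∠(a,o,c) = β, and these two points lie strictly on opposite sides of the line through a and c. (Hence there are precisely two circular arcs of a given central angle between a and c, one in each open halfplane bounded by the line ac.) -/

import Mathlib

open EuclideanGeometry Real Set

noncomputable section

/-- The Euclidean plane. -/
abbrev Pt : Type := EuclideanSpace ℝ (Fin 2)

/-- The image of a one-bend edge `(a,b,c)`: the union of segments `[a,b]` and `[b,c]`. -/
def bendImage (e : Pt × Pt × Pt) : Set Pt :=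
  segment ℝ e.1 e.2.1 ∪ segment ℝ e.2.1 e.2.2

/-- The endpoints of a (bend or arc) edge `(a,b,c)` are `a` and `c`. -/
def edgeEndpoints (e : Pt × Pt × Pt) : Set Pt := {e.1, e.2.2}

/-- An `α`-bend edge: a triple `(a,b,c)` with `a ≠ c` and angle `α` at `b`. -/
def IsBendEdge (α : ℝ) (e : Pt × Pt × Pt) : Prop :=
  e.1 ≠ e.2.2 ∧ ∠ e.1 e.2.1 e.2.2 = α

/-- A plane `α`-bend multigraph on a finite vertex set `V`. -/
def IsPlaneBendMultigraph (α : ℝ) (V : Finset Pt) (E : Finset (Pt × Pt × Pt)) : Prop :=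
  (∀ e ∈ E, IsBendEdge α e ∧ e.1 ∈ V ∧ e.2.2 ∈ V) ∧
  (∀ e ∈ E, ∀ f ∈ E, e ≠ f → bendImage e ≠ bendImage f) ∧
  (∀ e ∈ E, ∀ v ∈ V, (v : Pt) ∈ bendImage e → (v : Pt) ∈ edgeEndpoints e) ∧
  (∀ e ∈ E, ∀ f ∈ E, e ≠ f →
    bendImage e ∩ bendImage f ⊆ edgeEndpoints e ∩ edgeEndpoints f)

/-- A plane `α`-bend graph: a plane `α`-bend multigraph in which distinct edges
have distinct endpoint pairs. -/
def IsPlaneBendGraph (α : ℝ) (V : Finset Pt) (E : Finset (Pt × Pt × Pt)) : Prop :=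
  IsPlaneBendMultigraph α V E ∧
  ∀ e ∈ E, ∀ f ∈ E, e ≠ f → edgeEndpoints e ≠ edgeEndpoints f

/-- An `α`-arc edge: a triple `(a,b,c)` with `a ≠ c`, `b` off of the line `ac`,
and angle `α` at `b`. -/
def IsArcEdge (α : ℝ) (e : Pt × Pt × Pt) : Prop :=
  e.1 ≠ e.2.2 ∧ e.2.1 ∉ affineSpan ℝ ({e.1, e.2.2} : Set Pt) ∧ ∠ e.1 e.2.1 e.2.2 = α

/-- The image of an arc edge `(a,b,c)`: `{a,c}` together with the points strictly on the
same side of line `ac` as `b` from which the segment `ac` subtends the same angle as at `b`. -/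
def arcImage (e : Pt × Pt × Pt) : Set Pt :=
  ({e.1, e.2.2} : Set Pt) ∪
    {x : Pt | (affineSpan ℝ ({e.1, e.2.2} : Set Pt)).SSameSide x e.2.1 ∧
      ∠ e.1 x e.2.2 = ∠ e.1 e.2.1 e.2.2}

/-- A plane `α`-arc multigraph on a finite vertex set `V`. -/
def IsPlaneArcMultigraph (α : ℝ) (V : Finset Pt) (E : Finset (Pt × Pt × Pt)) : Prop :=
  (∀ e ∈ E, IsArcEdge α e ∧ e.1 ∈ V ∧ e.2.2 ∈ V) ∧
  (∀ e ∈ E, ∀ f ∈ E, e ≠ f → arcImage e ≠ arcImage f) ∧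
  (∀ e ∈ E, ∀ v ∈ V, (v : Pt) ∈ arcImage e → (v : Pt) ∈ edgeEndpoints e) ∧
  (∀ e ∈ E, ∀ f ∈ E, e ≠ f →
    arcImage e ∩ arcImage f ⊆ edgeEndpoints e ∩ edgeEndpoints f)

/-- A plane `α`-arc graph: a plane `α`-arc multigraph in which distinct edges
have distinct endpoint pairs. -/
def IsPlaneArcGraph (α : ℝ) (V : Finset Pt) (E : Finset (Pt × Pt × Pt)) : Prop :=
  IsPlaneArcMultigraph α V E ∧
  ∀ e ∈ E, ∀ f ∈ E, e ≠ f → edgeEndpoints e ≠ edgeEndpoints f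

/-- A finite point set is in general position if no three of its points are collinear. -/
def GenPos (P : Finset Pt) : Prop :=
  ∀ p ∈ P, ∀ q ∈ P, ∀ r ∈ P, p ≠ q → p ≠ r → q ≠ r →
    ¬ Collinear ℝ ({p, q, r} : Set Pt)

/-- A planar straight-line graph on `P`: edges are (ordered representatives of unordered)
pairs of distinct points of `P` whose closed segments pairwise intersect only in shared
endpoints, and no segment contains a point of `P` other than its endpoints. -/
def IsPSLG (P : Finset Pt) (E : Finset (Pt × Pt)) : Prop :=
  (∀ e ∈ E, e.1 ∈ P ∧ e.2 ∈ P ∧ e.1 ≠ e.2) ∧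
  (∀ e ∈ E, ∀ f ∈ E, e ≠ f → segment ℝ e.1 e.2 ≠ segment ℝ f.1 f.2) ∧
  (∀ e ∈ E, ∀ p ∈ P, (p : Pt) ∈ segment ℝ e.1 e.2 → p = e.1 ∨ p = e.2) ∧
  (∀ e ∈ E, ∀ f ∈ E, e ≠ f →
    segment ℝ e.1 e.2 ∩ segment ℝ f.1 f.2 ⊆ ({e.1, e.2} : Set Pt) ∩ ({f.1, f.2} : Set Pt))

/-- `M P`: the maximum number of edges of a planar straight-line graph on `P`. -/
def M (P : Finset Pt) : ℕ :=
  sSup {m : ℕ | ∃ E : Finset (Pt × Pt), IsPSLG P E ∧ E.card = m}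

/-- Two segments (given by their endpoint pairs) cross: they meet in exactly one point,
which lies in the relative interior (open segment) of both. -/
def SegCross (s t : Pt × Pt) : Prop :=
  ∃ x : Pt, segment ℝ s.1 s.2 ∩ segment ℝ t.1 t.2 = {x} ∧
    x ∈ openSegment ℝ s.1 s.2 ∧ x ∈ openSegment ℝ t.1 t.2

/-- For distinct `a, c` and `β ∈ (0,π)` there are exactly two points `o` equidistant from
`a` and `c` with `∠ a o c = β`, and they lie strictly on opposite sides of line `ac`. -/
theorem stmt_1 (a c : Pt) (hac : a ≠ c) (β : ℝ) (hβ : β ∈ Set.Ioo 0 π) :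
    ∃ o₁ o₂ : Pt, o₁ ≠ o₂ ∧
      (dist o₁ a = dist o₁ c ∧ ∠ a o₁ c = β) ∧
      (dist o₂ a = dist o₂ c ∧ ∠ a o₂ c = β) ∧
      (affineSpan ℝ ({a, c} : Set Pt)).SOppSide o₁ o₂ ∧
      (∀ o : Pt, dist o a = dist o c → ∠ a o c = β → o = o₁ ∨ o = o₂) := by
  obtain ⟨hβ0, hβπ⟩ := hβ
  set cβ := Real.cos β with hcβdef
  have hcβlt : cβ < 1 := by
    have := Real.strictAntiOn_cos (Set.left_mem_Icc.2 Real.pi_pos.le) ⟨hβ0.le, hβπ.le⟩ hβ0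
    simpa [hcβdef] using this
  have hcβgt : -1 < cβ := by
    have := Real.strictAntiOn_cos ⟨hβ0.le, hβπ.le⟩ (Set.right_mem_Icc.2 Real.pi_pos.le) hβπ
    simpa [hcβdef] using this
  set v : Pt := c - a with hvdef
  have hv0 : v ≠ 0 := sub_ne_zero.mpr (Ne.symm hac)
  set w : Pt := (WithLp.equiv 2 (Fin 2 → ℝ)).symm ![-(v 1), v 0] with hwdef
  have hw0 : w 0 = -(v 1) := rfl
  have hw1 : w 1 = v 0 := rfl
  have hvw : inner ℝ v w = (0 : ℝ) := by
    simp only [PiLp.inner_apply, RCLike.inner_apply, conj_trivial, Fin.sum_univ_two, hw0, hw1]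
    ring
  have hwv : inner ℝ w v = (0 : ℝ) := by rw [real_inner_comm]; exact hvw
  have hww : inner ℝ w w = (inner ℝ v v : ℝ) := by
    simp only [PiLp.inner_apply, RCLike.inner_apply, conj_trivial, Fin.sum_univ_two, hw0, hw1]
    ring
  set K : ℝ := inner ℝ v v with hKdef
  have hK : 0 < K := by
    rw [hKdef, real_inner_self_eq_norm_sq]
    have := norm_pos_iff.mpr hv0
    positivity
  have hw0' : w ≠ 0 := by
    intro h
    apply hv0
    have h0 : w 0 = 0 := by rw [h]; rfl
    have h1 : w 1 = 0 := by rw [h]; rfl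
    rw [hw0] at h0; rw [hw1] at h1
    ext i
    fin_cases i
    · simpa using h1
    · simpa using (neg_eq_zero.mp h0)
  set m : Pt := midpoint ℝ a c with hmdef
  have hmval : m = (2⁻¹ : ℝ) • (a + c) := by
    rw [hmdef, midpoint_eq_smul_add, invOf_eq_inv]
  -- characterization of equidistant points
  have hdist : ∀ o : Pt, dist o a = dist o c ↔ inner ℝ (o - m) v = (0 : ℝ) := by
    intro o
    rw [← AffineSubspace.mem_perpBisector_iff_dist_eq,
      AffineSubspace.mem_perpBisector_iff_inner_eq_zero]
    rfl
  -- equidistant points are on the line through m with direction w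
  have hspan : ∀ x : Pt, inner ℝ x v = (0 : ℝ) → ∃ s : ℝ, x = s • w := by
    intro x hx
    simp only [PiLp.inner_apply, RCLike.inner_apply, conj_trivial, Fin.sum_univ_two] at hx
    have hv01 : v 0 ≠ 0 ∨ v 1 ≠ 0 := by
      by_contra h
      push_neg at h
      apply hv0
      ext i
      fin_cases i
      · simpa using h.1
      · simpa using h.2
    rcases hv01 with h0 | h1
    · refine ⟨x 1 / v 0, ?_⟩
      ext i
      fin_cases i
      · show x 0 = (x 1 / v 0) * w 0
        rw [hw0]
        field_simp
        linarith
      · show x 1 = (x 1 / v 0) * w 1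
        rw [hw1]; field_simp
    · refine ⟨-(x 0) / v 1, ?_⟩
      ext i
      fin_cases i
      · show x 0 = (-(x 0) / v 1) * w 0
        rw [hw0]; field_simp
      · show x 1 = (-(x 0) / v 1) * w 1
        rw [hw1]
        field_simp
        linarith
  -- cosine of the angle at a point on the bisector
  have hcos : ∀ s : ℝ, Real.cos (∠ a (m + s • w) c) = (s ^ 2 - 4⁻¹) / (s ^ 2 + 4⁻¹) := by
    intro s
    have hx : a -ᵥ (m + s • w) = -((2⁻¹ : ℝ) • v + s • w) := by
      show a - (m + s • w) = -((2⁻¹ : ℝ) • v + s • w)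
      rw [hmval, hvdef]; module
    have hy : c -ᵥ (m + s • w) = (2⁻¹ : ℝ) • v - s • w := by
      show c - (m + s • w) = (2⁻¹ : ℝ) • v - s • w
      rw [hmval, hvdef]; module
    rw [EuclideanGeometry.angle, InnerProductGeometry.cos_angle, hx, hy]
    have hinner : inner ℝ (-((2⁻¹ : ℝ) • v + s • w)) ((2⁻¹ : ℝ) • v - s • w)
        = (s ^ 2 - 4⁻¹) * K := by
      simp only [inner_neg_left, inner_add_left, inner_sub_right, real_inner_smul_left,
        real_inner_smul_right, hvw, hwv, hww, ← hKdef]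
      ring
    have hxx : ‖-((2⁻¹ : ℝ) • v + s • w)‖ ^ 2 = (s ^ 2 + 4⁻¹) * K := by
      rw [← real_inner_self_eq_norm_sq]
      simp only [inner_neg_left, inner_neg_right, inner_add_left, inner_add_right,
        real_inner_smul_left, real_inner_smul_right, hvw, hwv, hww, ← hKdef]
      ring
    have hyy : ‖(2⁻¹ : ℝ) • v - s • w‖ ^ 2 = (s ^ 2 + 4⁻¹) * K := by
      rw [← real_inner_self_eq_norm_sq]
      simp only [inner_sub_left, inner_sub_right, real_inner_smul_left,
        real_inner_smul_right, hvw, hwv, hww, ← hKdef]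
      ring
    have hpos : (0 : ℝ) < (s ^ 2 + 4⁻¹) * K := by positivity
    have hxn : ‖-((2⁻¹ : ℝ) • v + s • w)‖ = Real.sqrt ((s ^ 2 + 4⁻¹) * K) := by
      rw [← hxx, Real.sqrt_sq (norm_nonneg _)]
    have hyn : ‖(2⁻¹ : ℝ) • v - s • w‖ = Real.sqrt ((s ^ 2 + 4⁻¹) * K) := by
      rw [← hyy, Real.sqrt_sq (norm_nonneg _)]
    rw [hinner, hxn, hyn, Real.mul_self_sqrt hpos.le, mul_div_mul_right _ _ (ne_of_gt hK)]
  -- the parameter value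
  set t : ℝ := Real.sqrt ((1 + cβ) / (1 - cβ)) / 2 with htdef
  have ht0 : 0 < t := by
    have : (0 : ℝ) < (1 + cβ) / (1 - cβ) := by
      apply div_pos <;> linarith
    have := Real.sqrt_pos.2 this
    rw [htdef]; linarith
  have ht2 : t ^ 2 = (1 + cβ) / ((1 - cβ) * 4) := by
    rw [htdef, div_pow, Real.sq_sqrt (by apply div_nonneg <;> linarith)]
    rw [div_div]
    norm_num
  have htcos : (t ^ 2 - 4⁻¹) / (t ^ 2 + 4⁻¹) = cβ := by
    rw [ht2]
    have h1 : (1 : ℝ) - cβ ≠ 0 := by linarith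
    field_simp
    ring
  -- characterization of the angle condition on the bisector
  have hang : ∀ s : ℝ, ∠ a (m + s • w) c = β ↔ (s = t ∨ s = -t) := by
    intro s
    constructor
    · intro h
      have hc : cβ = (s ^ 2 - 4⁻¹) / (s ^ 2 + 4⁻¹) := by
        rw [hcβdef, ← h, hcos s]
      have hsne : s ^ 2 + 4⁻¹ ≠ 0 := by positivity
      rw [eq_div_iff hsne] at hc
      have hs2 : s ^ 2 = t ^ 2 := by
        rw [ht2]
        have h1 : (1 : ℝ) - cβ ≠ 0 := by linarith
        field_simp
        linarith [hc]
      exact sq_eq_sq_iff_eq_or_eq_neg.mp hs2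
    · intro h
      have hs2 : s ^ 2 = t ^ 2 := by
        rcases h with rfl | rfl
        · rfl
        · ring
      apply Real.injOn_cos ⟨EuclideanGeometry.angle_nonneg _ _ _,
        EuclideanGeometry.angle_le_pi _ _ _⟩ ⟨hβ0.le, hβπ.le⟩
      rw [hcos s, hs2, htcos]
  -- equidistance along the bisector
  have hdists : ∀ s : ℝ, dist (m + s • w) a = dist (m + s • w) c := by
    intro s
    rw [hdist]
    have : m + s • w - m = s • w := by abel
    rw [this, real_inner_smul_left, hwv, mul_zero]
  -- points off the line
  have hnotmem : ∀ s : ℝ, s ≠ 0 → m + s • w ∉ affineSpan ℝ ({a, c} : Set Pt) := by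
    intro s hs hmem
    have ha : a ∈ affineSpan ℝ ({a, c} : Set Pt) := left_mem_affineSpan_pair ℝ a c
    have hd : (m + s • w) -ᵥ a ∈ (affineSpan ℝ ({a, c} : Set Pt)).direction :=
      AffineSubspace.vsub_mem_direction hmem ha
    rw [direction_affineSpan, vectorSpan_pair] at hd
    obtain ⟨r, hr⟩ := Submodule.mem_span_singleton.mp hd
    have hval : (m + s • w) -ᵥ a = (2⁻¹ : ℝ) • v + s • w := by
      show m + s • w - a = (2⁻¹ : ℝ) • v + s • w
      rw [hmval, hvdef]; module
    have hav : a -ᵥ c = -v := by show a - c = -v; rw [hvdef]; module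
    rw [hval, hav] at hr
    have h1 : inner ℝ ((2⁻¹ : ℝ) • v + s • w) w = s * K := by
      rw [inner_add_left, real_inner_smul_left, real_inner_smul_left, hvw, hww]
      ring
    have h2 : inner ℝ (r • -v) w = (0 : ℝ) := by
      rw [real_inner_smul_left, inner_neg_left, hvw]
      ring
    rw [← hr, h2] at h1
    have : s * K ≠ 0 := mul_ne_zero hs (ne_of_gt hK)
    exact this h1.symm
  have hm_mem : m ∈ affineSpan ℝ ({a, c} : Set Pt) := by
    rw [hmdef, ← lineMap_one_half]
    exact AffineMap.lineMap_mem_affineSpan_pair _ _ _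
  refine ⟨m + t • w, m + (-t) • w, ?_, ⟨hdists t, (hang t).2 (Or.inl rfl)⟩,
    ⟨hdists (-t), (hang (-t)).2 (Or.inr rfl)⟩, ?_, ?_⟩
  · intro h
    have : t • w = (-t) • w := by
      have := add_left_cancel h
      exact this
    have h2 : (t - (-t)) • w = 0 := by
      rw [sub_smul, sub_eq_zero]; exact this
    rcases smul_eq_zero.mp h2 with h3 | h3
    · exact (ne_of_gt ht0) (by linarith)
    · exact hw0' h3
  · refine ⟨⟨m, hm_mem, m, hm_mem, ?_⟩, hnotmem t (ne_of_gt ht0),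
      hnotmem (-t) (by simpa using ne_of_gt ht0)⟩
    have h1 : (m + t • w) -ᵥ m = t • w := by
      show m + t • w - m = t • w; abel
    have h2 : m -ᵥ (m + (-t) • w) = t • w := by
      show m - (m + (-t) • w) = t • w; module
    rw [h1, h2]
    exact SameRay.rfl
  · intro o hd hA
    have hx := (hdist o).mp hd
    obtain ⟨s, hs⟩ := hspan (o - m) hx
    have ho : o = m + s • w := by
      rw [← hs]; abel
    rw [ho] at hA
    rcases (hang s).mp hA with rfl | rfl
    · exact Or.inl ho
    · exact Or.inr ho
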